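/- Let μ be a Borel probability measure on the dyadic Cantor set 𝕂 satisfying the non-homogeneous Markov property (M). Then there exists a strictly increasing sequence of natural numbers (n_l) such that for μ-almost every x ∈ 𝕂, lim_{l→∞} (−1/(n_l log 2)) log μ(I_{n_l}(x)) = h^*(μ), where h^*(μ) is the upper entropy of μ; likewise there exists a strictly increasing sequence (m_l) such that (−1/(m_l log 2)) log μ(I_{m_l}(x)) → h_*(μ) μ-almost everywhere. -/

import Mathlib

open MeasureTheory Filter Topology
open scoped ENNReal NNReal

noncomputable section

/-- The dyadic Cantor set `𝕂 = {0,1}^ℕ`. -/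
abbrev K : Type := ℕ → Bool

/-- The metric `d(x,y) = (1/2)^(first index where x and y differ)` on `𝕂`. -/
instance : MetricSpace K := PiNat.metricSpace

/-- The cylinder of generation `n` determined by the word `ε : Fin n → Bool`. -/
def cyl {n : ℕ} (ε : Fin n → Bool) : Set K := {x | ∀ i : Fin n, x i = ε i}

/-- The cylinder `I_n(x)` of generation `n` containing the point `x`. -/
def cylAt (x : K) (n : ℕ) : Set K := cyl (fun i : Fin n => x i)

/-- The weight attributed to a child cylinder whose parent's last letter is `e`, when the
new letter is `b`, by the non-homogeneous Markov process with weights `pq = (pₙ, qₙ)`. -/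
def weight (pq : ℝ × ℝ) (e b : Bool) : ℝ :=
  if e = false then (if b = false then pq.1 else 1 - pq.1)
  else (if b = false then pq.2 else 1 - pq.2)

/-- A Borel measure `μ` on `𝕂` satisfies the non-homogeneous Markov property (M)
for the sequences `(p n)`, `(q n)`: `μ(I₀) = p₀`, `μ(I₁) = 1 - p₀`, and the ratio
`μ(IJ)/μ(I)` for a cylinder `I ∈ ℱ_{n+1}` and a child `IJ ∈ ℱ_{n+2}` is `p (n+1)`,
`1 - p (n+1)`, `q (n+1)` or `1 - q (n+1)` according to the last letter of `I` and
the new letter of `IJ`. -/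
def MarkovMeasure (μ : Measure K) (p q : ℕ → ℝ) : Prop :=
  μ (cyl ![false]) = ENNReal.ofReal (p 0) ∧
  μ (cyl ![true]) = ENNReal.ofReal (1 - p 0) ∧
  ∀ (n : ℕ) (ε : Fin (n + 1) → Bool) (b : Bool),
    μ (cyl (Fin.snoc ε b)) =
      μ (cyl ε) * ENNReal.ofReal (weight (p (n + 1), q (n + 1)) (ε (Fin.last n)) b)

/-- `Σ_{I ∈ ℱ_n} μ(I) log μ(I)` (with the convention `0 · log 0 = 0`,
automatic since `Real.log 0 = 0`). -/
def entropySum (μ : Measure K) (n : ℕ) : ℝ :=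
  ∑ ε : Fin n → Bool, (μ (cyl ε)).toReal * Real.log (μ (cyl ε)).toReal

/-- The lower entropy `h_*(μ) = liminf (-1/(n log 2)) Σ_{I ∈ ℱ_n} μ(I) log μ(I)`. -/
def hLow (μ : Measure K) : ℝ :=
  liminf (fun n : ℕ => (-1 / (n * Real.log 2)) * entropySum μ n) atTop

/-- The upper entropy `h^*(μ) = limsup (-1/(n log 2)) Σ_{I ∈ ℱ_n} μ(I) log μ(I)`. -/
def hUpp (μ : Measure K) : ℝ :=
  limsup (fun n : ℕ => (-1 / (n * Real.log 2)) * entropySum μ n) atTop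

/-- The lower Hausdorff dimension of a measure:
`dim_*(μ) = inf {dim_H E : E ⊆ 𝕂 Borel, μ(E) > 0}`. -/
def dimLow (μ : Measure K) : ℝ≥0∞ :=
  ⨅ (E : Set K) (_ : MeasurableSet E) (_ : 0 < μ E), dimH E

/-- The upper Hausdorff dimension of a measure:
`dim^*(μ) = inf {dim_H E : E ⊆ 𝕂 Borel, μ(𝕂 ∖ E) = 0}`. -/
def dimUpp (μ : Measure K) : ℝ≥0∞ :=
  ⨅ (E : Set K) (_ : MeasurableSet E) (_ : μ Eᶜ = 0), dimH E


open MeasureTheory Filter Topology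
open scoped ENNReal NNReal



namespace MAux
open Finset Real

variable (p q : ℕ → ℝ)

/-- last letter of a word (junk `false` for the empty word) -/
def lst : ∀ {n : ℕ}, (Fin n → Bool) → Bool
  | 0, _ => false
  | _+1, ε => ε (Fin.last _)

/-- transition probability to letter `b` at step `n`, given previous letter `e` -/
def trans : ℕ → Bool → Bool → ℝ
  | 0, _, b => if b = false then p 0 else 1 - p 0
  | (k+1), e, b => weight (p (k+1), q (k+1)) e b

/-- the probability of the cylinder of a word -/
def rho : ∀ {n : ℕ}, (Fin n → Bool) → ℝ
  | 0, _ => 1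
  | n+1, ε => rho (Fin.init ε) * trans p q n (lst (Fin.init ε)) (ε (Fin.last n))


/-- expectation of a function of the first `n` letters -/
def Ex (n : ℕ) (g : (Fin n → Bool) → ℝ) : ℝ := ∑ ε : Fin n → Bool, rho p q ε * g ε

/-- martingale-difference property at level `k` -/
def Mdiff (k : ℕ) (d : (Fin (k+1) → Bool) → ℝ) : Prop :=
  ∀ ε : Fin k → Bool, ∑ b : Bool, trans p q k (lst ε) b * d (Fin.snoc ε b) = 0

variable {p q}

lemma rho_snoc {n : ℕ} (ε : Fin n → Bool) (b : Bool) :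
    rho p q (Fin.snoc ε b) = rho p q ε * trans p q n (lst ε) b := by
  have h : rho p q (Fin.snoc ε b : Fin (n+1) → Bool)
      = rho p q (Fin.init (Fin.snoc ε b : Fin (n+1) → Bool)) *
        trans p q n (lst (Fin.init (Fin.snoc ε b : Fin (n+1) → Bool)))
          ((Fin.snoc ε b : Fin (n+1) → Bool) (Fin.last n)) := rfl
  rw [h, Fin.init_snoc, Fin.snoc_last]

lemma trans_true (n : ℕ) (e : Bool) : trans p q n e true = 1 - trans p q n e false := by
  cases n <;> cases e <;> simp [trans, weight]

lemma Ex_congr {n : ℕ} {g h : (Fin n → Bool) → ℝ} (hgh : ∀ ε, g ε = h ε) :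
    Ex p q n g = Ex p q n h :=
  Finset.sum_congr rfl fun ε _ => by rw [hgh]

lemma sum_snoc {n : ℕ} (F : (Fin (n+1) → Bool) → ℝ) :
    ∑ ε : Fin (n+1) → Bool, F ε = ∑ ε : Fin n → Bool, ∑ b : Bool, F (Fin.snoc ε b) := by
  rw [← (Fin.snocEquiv (fun _ => Bool)).sum_comp F, Fintype.sum_prod_type]
  have hse : ∀ x : Bool × (Fin n → Bool),
      F ((Fin.snocEquiv (fun _ => Bool)) x) = F (Fin.snoc x.2 x.1) :=
    fun x => congrArg F (funext fun i => Fin.snocEquiv_apply _ _ _)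
  simp only [hse]
  rw [Finset.sum_comm]

lemma tower (n : ℕ) (g : (Fin (n+1) → Bool) → ℝ) :
    Ex p q (n+1) g = Ex p q n (fun ε => ∑ b : Bool, trans p q n (lst ε) b * g (Fin.snoc ε b)) := by
  unfold Ex
  rw [sum_snoc (fun ε => rho p q ε * g ε)]
  refine Finset.sum_congr rfl (fun ε _ => ?_)
  rw [Finset.mul_sum]
  refine Finset.sum_congr rfl (fun b _ => ?_)
  rw [rho_snoc]; ring

lemma Ex_zero (g : (Fin 0 → Bool) → ℝ) : Ex p q 0 g = g default := by
  rw [Ex, Fintype.sum_unique]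
  simp only [show ∀ ε : Fin 0 → Bool, rho p q ε = 1 from fun _ => rfl, one_mul]
  exact congrArg g (Subsingleton.elim _ _)

lemma Ex_add (n : ℕ) (g h : (Fin n → Bool) → ℝ) :
    Ex p q n (fun ε => g ε + h ε) = Ex p q n g + Ex p q n h := by
  unfold Ex; rw [← Finset.sum_add_distrib]; exact Finset.sum_congr rfl fun ε _ => by ring

lemma Ex_smul (n : ℕ) (r : ℝ) (g : (Fin n → Bool) → ℝ) :
    Ex p q n (fun ε => r * g ε) = r * Ex p q n g := by
  unfold Ex; rw [Finset.mul_sum]; exact Finset.sum_congr rfl fun ε _ => by ring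

lemma Ex_sub (n : ℕ) (g h : (Fin n → Bool) → ℝ) :
    Ex p q n (fun ε => g ε - h ε) = Ex p q n g - Ex p q n h := by
  unfold Ex; rw [← Finset.sum_sub_distrib]; exact Finset.sum_congr rfl fun ε _ => by ring

variable (hp : ∀ n, p n ∈ Set.Icc (0:ℝ) 1) (hq : ∀ n, q n ∈ Set.Icc (0:ℝ) 1)
include hp hq

lemma trans_nonneg (n : ℕ) (e b : Bool) : 0 ≤ trans p q n e b := by
  cases n with
  | zero =>
    have := hp 0
    simp only [trans]; cases b <;> simp_all [Set.mem_Icc] <;> linarith [this.2]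
  | succ k =>
    have h1 := hp (k+1); have h2 := hq (k+1)
    simp only [trans, weight]
    cases e <;> cases b <;> simp_all [Set.mem_Icc] <;> linarith

lemma trans_le_one (n : ℕ) (e b : Bool) : trans p q n e b ≤ 1 := by
  cases n with
  | zero =>
    have := hp 0
    simp only [trans]; cases b <;> simp_all [Set.mem_Icc] <;> linarith [this.1]
  | succ k =>
    have h1 := hp (k+1); have h2 := hq (k+1)
    simp only [trans, weight]
    cases e <;> cases b <;> simp_all [Set.mem_Icc] <;> linarith

lemma trans_sum (n : ℕ) (e : Bool) : ∑ b : Bool, trans p q n e b = 1 := by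
  rw [Fintype.sum_bool, trans_true]; ring

lemma rho_nonneg : ∀ {n : ℕ} (ε : Fin n → Bool), 0 ≤ rho p q ε
  | 0, _ => zero_le_one
  | n+1, ε => by
    rw [show ε = Fin.snoc (Fin.init ε) (ε (Fin.last n)) from (Fin.snoc_init_self ε).symm,
      rho_snoc]
    exact mul_nonneg (rho_nonneg _) (trans_nonneg hp hq n _ _)

lemma Ex_le_Ex (n : ℕ) {g h : (Fin n → Bool) → ℝ} (hgh : ∀ ε, g ε ≤ h ε) :
    Ex p q n g ≤ Ex p q n h :=
  Finset.sum_le_sum fun ε _ => mul_le_mul_of_nonneg_left (hgh ε) (rho_nonneg hp hq ε)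

lemma Ex_one (n : ℕ) : Ex p q n (fun _ => 1) = 1 := by
  induction n with
  | zero => rw [Ex_zero]
  | succ n ih =>
    rw [tower]
    rw [Ex_congr (fun ε => by simpa using trans_sum hp hq n (lst ε))]
    exact ih

lemma Ex_const (n : ℕ) (r : ℝ) : Ex p q n (fun _ => r) = r := by
  have h := Ex_smul (p := p) (q := q) n r (fun _ => 1)
  rw [Ex_one hp hq] at h
  simpa using h

lemma Ex_le_const (n : ℕ) {g : (Fin n → Bool) → ℝ} {r : ℝ} (hg : ∀ ε, g ε ≤ r) :
    Ex p q n g ≤ r := by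
  have h := Ex_le_Ex hp hq n hg (h := fun _ => r)
  rwa [Ex_const hp hq] at h

lemma Ex_nonneg (n : ℕ) {g : (Fin n → Bool) → ℝ} (hg : ∀ ε, 0 ≤ g ε) :
    0 ≤ Ex p q n g := by
  have h := Ex_le_Ex hp hq n hg (g := fun _ => 0)
  rwa [Ex_const hp hq] at h

lemma Ex_comp_init (n : ℕ) (g : (Fin n → Bool) → ℝ) :
    Ex p q (n+1) (fun ε => g (Fin.init ε)) = Ex p q n g := by
  rw [tower]
  refine Ex_congr (fun ε => ?_)
  simp only [Fin.init_snoc]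
  rw [← Finset.sum_mul, trans_sum hp hq, one_mul]



lemma Ex_mul_mdiff (k : ℕ) (g : (Fin k → Bool) → ℝ) {d : (Fin (k+1) → Bool) → ℝ}
    (hd : Mdiff (p := p) (q := q) k d) :
    Ex p q (k+1) (fun ε => g (Fin.init ε) * d ε) = 0 := by
  rw [tower]
  refine Eq.trans (Ex_congr fun ε => ?_) (Ex_const hp hq k 0)
  simp only [Fin.init_snoc]
  have h2 : ∀ b : Bool, trans p q k (lst ε) b * (g ε * d (Fin.snoc ε b))
      = g ε * (trans p q k (lst ε) b * d (Fin.snoc ε b)) := fun b => by ring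
  rw [Finset.sum_congr rfl fun b _ => h2 b, ← Finset.mul_sum, hd ε, mul_zero]

omit hp hq

/-- cumulative sum of a family of one-step functions -/
def liftSum (D : ∀ k : ℕ, (Fin (k+1) → Bool) → ℝ) : ∀ (N : ℕ), (Fin N → Bool) → ℝ
  | 0, _ => 0
  | N+1, ε => liftSum D N (Fin.init ε) + D N ε

lemma liftSum_congr {D D' : ∀ k : ℕ, (Fin (k+1) → Bool) → ℝ} :
    ∀ (N : ℕ), (∀ k < N, ∀ ε, D k ε = D' k ε) → ∀ ε, liftSum D N ε = liftSum D' N ε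
  | 0, _, _ => rfl
  | N+1, h, ε => by
    show liftSum D N _ + _ = liftSum D' N _ + _
    rw [liftSum_congr N (fun k hk => h k (Nat.lt_succ_of_lt hk)) (Fin.init ε),
      h N (Nat.lt_succ_self N) ε]

lemma liftSum_add (D D' : ∀ k : ℕ, (Fin (k+1) → Bool) → ℝ) :
    ∀ (N : ℕ) (ε : Fin N → Bool),
      liftSum (fun k ε' => D k ε' + D' k ε') N ε = liftSum D N ε + liftSum D' N ε
  | 0, _ => by simp [liftSum]
  | N+1, ε => by
    show liftSum _ N _ + _ = _
    rw [liftSum_add D D' N (Fin.init ε)]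
    show _ = liftSum D N _ + D N ε + (liftSum D' N _ + D' N ε)
    ring

lemma liftSum_smul (r : ℝ) (D : ∀ k : ℕ, (Fin (k+1) → Bool) → ℝ) :
    ∀ (N : ℕ) (ε : Fin N → Bool),
      liftSum (fun k ε' => r * D k ε') N ε = r * liftSum D N ε
  | 0, _ => by simp [liftSum]
  | N+1, ε => by
    show liftSum _ N _ + _ = _
    rw [liftSum_smul r D N (Fin.init ε)]
    show _ = r * (liftSum D N _ + D N ε)
    ring

include hp hq

/-- Pythagoras / orthogonality of martingale increments -/
lemma Ex_liftSum_sq (D : ∀ k : ℕ, (Fin (k+1) → Bool) → ℝ)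
    (hD : ∀ k, Mdiff (p := p) (q := q) k (D k)) :
    ∀ N : ℕ, Ex p q N (fun ε => (liftSum D N ε)^2)
      = ∑ k ∈ Finset.range N, Ex p q (k+1) (fun ε => (D k ε)^2)
  | 0 => by simp [Ex_zero, liftSum]
  | N+1 => by
    have expand : ∀ ε : Fin (N+1) → Bool, (liftSum D (N+1) ε)^2
        = ((liftSum D N (Fin.init ε))^2 + (D N ε)^2)
            + (fun ε' => 2 * liftSum D N ε') (Fin.init ε) * D N ε := by
      intro ε; show (liftSum D N (Fin.init ε) + D N ε)^2 = _; ring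
    rw [Ex_congr expand, Ex_add, Ex_add,
      Ex_mul_mdiff hp hq N (fun ε => 2 * liftSum D N ε) (hD N),
      Ex_comp_init hp hq N (fun ε => (liftSum D N ε)^2),
      Ex_liftSum_sq D hD N, Finset.sum_range_succ, add_zero]

end MAux

namespace MAux
open Finset Real

/-- binary entropy -/
noncomputable def H (t : ℝ) : ℝ := -(t * Real.log t + (1-t) * Real.log (1-t))

lemma neg_mul_log_nonneg {t : ℝ} (h0 : 0 ≤ t) (h1 : t ≤ 1) : 0 ≤ -(t * Real.log t) := by
  have : t * Real.log t ≤ 0 := mul_nonpos_of_nonneg_of_nonpos h0 (Real.log_nonpos h0 h1)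
  linarith

lemma neg_log_le_two_div_sqrt {t : ℝ} (ht : 0 < t) : -Real.log t ≤ 2 / Real.sqrt t := by
  have hs : 0 < Real.sqrt t := Real.sqrt_pos.2 ht
  have h1 : Real.log (1/Real.sqrt t) ≤ 1/Real.sqrt t - 1 :=
    Real.log_le_sub_one_of_pos (by positivity)
  have h2 : Real.log (1/Real.sqrt t) = -(Real.log t) / 2 := by
    rw [one_div, Real.log_inv, Real.log_sqrt ht.le]; ring
  rw [h2] at h1
  have h3 : 2/Real.sqrt t = 2*(1/Real.sqrt t) := by ring
  linarith

lemma neg_mul_log_le {t : ℝ} (h0 : 0 ≤ t) : -(t * Real.log t) ≤ 2 * Real.sqrt t := by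
  rcases eq_or_lt_of_le h0 with h|h
  · simp [← h]
  rcases le_or_gt t 1 with h1|h1
  · have := neg_log_le_two_div_sqrt h
    have hs : 0 < Real.sqrt t := Real.sqrt_pos.2 h
    calc -(t * Real.log t) = t * (-Real.log t) := by ring
      _ ≤ t * (2 / Real.sqrt t) := by
          exact mul_le_mul_of_nonneg_left this h0
      _ = 2 * (t / Real.sqrt t) := by ring
      _ = 2 * Real.sqrt t := by rw [Real.div_sqrt]
  · have : 0 ≤ Real.log t := Real.log_nonneg h1.le
    have : t * Real.log t ≥ 0 := mul_nonneg h0 this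
    have hs : 0 ≤ Real.sqrt t := Real.sqrt_nonneg t
    linarith

lemma mul_sq_log_le {t : ℝ} (h0 : 0 ≤ t) (h1 : t ≤ 1) : t * (Real.log t)^2 ≤ 4 := by
  rcases eq_or_lt_of_le h0 with h|h
  · rw [← h]; norm_num
  have hs : 0 < Real.sqrt t := Real.sqrt_pos.2 h
  have e1 : -(t * Real.log t) ≤ 2 * Real.sqrt t := neg_mul_log_le h0
  have e2 : -Real.log t ≤ 2 / Real.sqrt t := neg_log_le_two_div_sqrt h
  have e3 : 0 ≤ -(t * Real.log t) := neg_mul_log_nonneg h0 h1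
  have e4 : 0 ≤ -Real.log t := by
    have := Real.log_nonpos h0 h1; linarith
  calc t * (Real.log t)^2 = (-(t * Real.log t)) * (-Real.log t) := by ring
    _ ≤ (2 * Real.sqrt t) * (2 / Real.sqrt t) := mul_le_mul e1 e2 e4 (by positivity)
    _ = 4 * (Real.sqrt t / Real.sqrt t) := by ring
    _ = 4 := by rw [div_self hs.ne']; ring

lemma H_nonneg {r : ℝ} (h0 : 0 ≤ r) (h1 : r ≤ 1) : 0 ≤ H r := by
  have a1 := neg_mul_log_nonneg h0 h1
  have a2 := neg_mul_log_nonneg (t := 1-r) (by linarith) (by linarith)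
  unfold H; linarith

lemma H_le_four {r : ℝ} (h0 : 0 ≤ r) (h1 : r ≤ 1) : H r ≤ 4 := by
  have a1 := neg_mul_log_le h0
  have a2 := neg_mul_log_le (t := 1-r) (by linarith)
  have b1 : Real.sqrt r ≤ 1 := Real.sqrt_le_one.mpr h1
  have b2 : Real.sqrt (1-r) ≤ 1 := Real.sqrt_le_one.mpr (by linarith)
  unfold H; linarith

lemma H_symm (r : ℝ) : H r = H (1-r) := by
  unfold H; rw [show (1:ℝ)-(1-r) = r by ring]; ring

lemma H_le_aux {r u : ℝ} (h0 : 0 ≤ r) (hhalf : r ≤ 1/2) (hru : r ≤ u) (hu1 : u ≤ 1) :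
    H r ≤ 8*u*(1+|Real.log u|) := by
  have hu0 : 0 ≤ u := le_trans h0 hru
  have habs : 0 ≤ |Real.log u| := abs_nonneg _
  -- second term of H r
  have t2 : -((1-r) * Real.log (1-r)) ≤ r := by
    have hpos : (0:ℝ) < 1 - r := by linarith
    have hlog : Real.log ((1-r)⁻¹) ≤ (1-r)⁻¹ - 1 := Real.log_le_sub_one_of_pos (by positivity)
    rw [Real.log_inv] at hlog
    have h3 := mul_le_mul_of_nonneg_left hlog (le_of_lt hpos)
    have h2 : (1-r) * ((1-r)⁻¹ - 1) = r := by field_simp; ring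
    rw [h2] at h3
    have h4 : -((1-r) * Real.log (1-r)) = (1-r) * (-Real.log (1-r)) := by ring
    rw [h4]; exact h3
  -- first term
  have t1 : -(r * Real.log r) ≤ 2*u + 2*u*|Real.log u| := by
    rcases le_or_gt r (u^2) with hcase|hcase
    · have : -(r * Real.log r) ≤ 2 * Real.sqrt r := neg_mul_log_le h0
      have : Real.sqrt r ≤ u := by
        calc Real.sqrt r ≤ Real.sqrt (u^2) := Real.sqrt_le_sqrt hcase
          _ = u := Real.sqrt_sq hu0
      have := neg_mul_log_le h0
      nlinarith [abs_nonneg (Real.log u), hu0]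
    · have hr0 : 0 < r := lt_of_le_of_lt (by positivity) hcase
      have hupos : 0 < u := lt_of_le_of_lt (le_of_eq rfl) (lt_of_le_of_lt (by positivity) (lt_of_lt_of_le hcase hru))
      have hlogu : Real.log u ≤ 0 := Real.log_nonpos hupos.le hu1
      have habsu : |Real.log u| = -Real.log u := abs_of_nonpos hlogu
      have hlr : -Real.log r ≤ 2 * |Real.log u| := by
        have : Real.log (u^2) ≤ Real.log r := Real.log_le_log (by positivity) hcase.le
        rw [Real.log_pow] at this
        push_cast at this
        rw [habsu]; linarith
      have hlogr : 0 ≤ -Real.log r := by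
        have := Real.log_nonpos hr0.le (le_trans hru hu1); linarith
      calc -(r * Real.log r) = r * (-Real.log r) := by ring
        _ ≤ u * (2 * |Real.log u|) := by
            apply mul_le_mul hru hlr hlogr hu0
        _ ≤ 2*u + 2*u*|Real.log u| := by nlinarith [hu0]
  have : H r = -(r * Real.log r) + -((1-r) * Real.log (1-r)) := by unfold H; ring
  rw [this]
  nlinarith [hu0, habs]

lemma H_le_main {r u : ℝ} (h0 : 0 ≤ r) (h1 : r ≤ 1) (hmin : min r (1-r) ≤ u) (hu1 : u ≤ 1) :
    H r ≤ 8*u*(1+|Real.log u|) := by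
  rcases le_or_gt r (1/2) with hc|hc
  · have : min r (1-r) = r := min_eq_left (by linarith)
    exact H_le_aux h0 hc (by rw [this] at hmin; exact hmin) hu1
  · rw [H_symm]
    have : min r (1-r) = 1-r := min_eq_right (by linarith)
    exact H_le_aux (by linarith) (by linarith) (by rw [this] at hmin; exact hmin) hu1

lemma abs_H_sub_le {a b : ℝ} (ha : a ∈ Set.Icc (0:ℝ) 1) (hb : b ∈ Set.Icc (0:ℝ) 1) :
    |H a - H b| ≤ 8*(1-|a-b|)*(1+|Real.log (1-|a-b|)|) := by
  obtain ⟨ha0, ha1⟩ := ha; obtain ⟨hb0, hb1⟩ := hb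
  have hab : |a - b| ≤ 1 := by rw [abs_le]; constructor <;> linarith
  have hu1 : 1 - |a-b| ≤ 1 := by have := abs_nonneg (a-b); linarith
  have hma : min a (1-a) ≤ 1 - |a-b| := by
    rcases abs_cases (a-b) with ⟨h,_⟩|⟨h,_⟩
    · calc min a (1-a) ≤ 1-a := min_le_right _ _
        _ ≤ 1 - |a-b| := by rw [h]; linarith
    · calc min a (1-a) ≤ a := min_le_left _ _
        _ ≤ 1 - |a-b| := by rw [h]; linarith
  have hmb : min b (1-b) ≤ 1 - |a-b| := by
    rcases abs_cases (a-b) with ⟨h,_⟩|⟨h,_⟩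
    · calc min b (1-b) ≤ b := min_le_left _ _
        _ ≤ 1 - |a-b| := by rw [h]; linarith
    · calc min b (1-b) ≤ 1-b := min_le_right _ _
        _ ≤ 1 - |a-b| := by rw [h]; linarith
  have bA := H_le_main ha0 ha1 hma hu1
  have bB := H_le_main hb0 hb1 hmb hu1
  have nA := H_nonneg ha0 ha1
  have nB := H_nonneg hb0 hb1
  rw [abs_sub_le_iff]
  constructor <;> linarith

/-- splitting bound for the entropy-gap function -/
lemma Gsplit {u : ℝ} (hu0 : 0 ≤ u) (hu1 : u ≤ 1) {N : ℕ} (hN : 1 ≤ N) :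
    8*u*(1+|Real.log u|) ≤ 8*(1+2*Real.log N)*u + 24/N := by
  have hN1 : (1:ℝ) ≤ (N:ℝ) := by exact_mod_cast hN
  have hNpos : (0:ℝ) < N := by linarith
  have hlogN : 0 ≤ Real.log N := Real.log_nonneg hN1
  rcases eq_or_lt_of_le hu0 with h|hupos
  · rw [← h]; norm_num; positivity
  rcases le_or_gt (1/(N:ℝ)^2) u with hcase|hcase
  · have hlog : |Real.log u| ≤ 2 * Real.log N := by
      have h1 : Real.log (1/(N:ℝ)^2) ≤ Real.log u := Real.log_le_log (by positivity) hcase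
      have h2 : Real.log (1/(N:ℝ)^2) = -(2 * Real.log N) := by
        rw [one_div, Real.log_inv, Real.log_pow]; push_cast; ring
      have h3 : Real.log u ≤ 0 := Real.log_nonpos hupos.le hu1
      rw [abs_of_nonpos h3]; linarith
    have : 8*u*(1+|Real.log u|) ≤ 8*u*(1+2*Real.log N) := by
      apply mul_le_mul_of_nonneg_left _ (by linarith)
      linarith
    have h24 : 0 ≤ 24/(N:ℝ) := by positivity
    linarith [this]
  · have hsq : Real.sqrt u ≤ 1/(N:ℝ) := by
      rw [show (1/(N:ℝ)) = Real.sqrt ((1/(N:ℝ))^2) from (Real.sqrt_sq (by positivity)).symm]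
      apply Real.sqrt_le_sqrt
      rw [div_pow]; simpa using hcase.le
    have hul : u * |Real.log u| ≤ 2 * Real.sqrt u := by
      have h3 : Real.log u ≤ 0 := Real.log_nonpos hupos.le hu1
      rw [abs_of_nonpos h3]
      have := neg_mul_log_le hupos.le
      linarith [this]
    have hu_le : u ≤ 1/(N:ℝ) := by
      calc u ≤ 1/(N:ℝ)^2 := hcase.le
        _ ≤ 1/(N:ℝ) := by
          apply div_le_div_of_nonneg_left (by norm_num) hNpos
          nlinarith
    have : 8*u*(1+|Real.log u|) = 8*u + 8*(u*|Real.log u|) := by ring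
    rw [this]
    have e1 : 8*u ≤ 8/(N:ℝ) := by
      rw [div_eq_mul_one_div 8 (N:ℝ)]; linarith
    have e2 : 8*(u*|Real.log u|) ≤ 16/(N:ℝ) := by
      have : 2 * Real.sqrt u ≤ 2/(N:ℝ) := by
        rw [div_eq_mul_one_div 2 (N:ℝ)]; linarith
      have := le_trans hul this
      rw [div_eq_mul_one_div 16 (N:ℝ)]
      rw [div_eq_mul_one_div 2 (N:ℝ)] at this
      nlinarith [this]
    have e3 : 0 ≤ 8*(1+2*Real.log N)*u := by positivity
    have : 8/(N:ℝ) + 16/(N:ℝ) = 24/(N:ℝ) := by ring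
    linarith

/-- telescoping bound -/
lemma telescope {v : ℕ → ℝ} (hv : ∀ t, 0 ≤ v t ∧ v t ≤ 1) (a N : ℕ) :
    ∑ j ∈ Finset.Ico a N, (1 - v j) * ∏ t ∈ Finset.Ico a j, v t ≤ 1 := by
  set F : ℕ → ℝ := fun i => ∏ t ∈ Finset.Ico a (a+i), v t with hF
  have key : ∀ j ∈ Finset.Ico a N, (1 - v j) * ∏ t ∈ Finset.Ico a j, v t
      = F (j-a) - F (j-a+1) := by
    intro j hj
    obtain ⟨hj1, _⟩ := Finset.mem_Ico.mp hj
    have h1 : a + (j - a) = j := by omega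
    have h2 : a + (j - a + 1) = j + 1 := by omega
    rw [hF]
    simp only []
    rw [h1, h2, Finset.prod_Ico_succ_top hj1]
    ring
  rw [Finset.sum_congr rfl key]
  rw [show Finset.Ico a N = Finset.Ico a N from rfl]
  rw [Finset.sum_Ico_eq_sum_range]
  have : ∀ i ∈ Finset.range (N - a), F ((a+i)-a) - F ((a+i)-a+1) = F i - F (i+1) := by
    intro i _; congr 2 <;> omega
  rw [Finset.sum_congr rfl this, Finset.sum_range_sub' F (N-a)]
  have hF0 : F 0 = 1 := by simp [hF]
  have hFn : 0 ≤ F (N-a) := Finset.prod_nonneg fun t _ => (hv t).1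
  rw [hF0]; linarith

lemma prod_le_one' {v : ℕ → ℝ} (hv : ∀ t, 0 ≤ v t ∧ v t ≤ 1) (a j : ℕ) :
    ∏ t ∈ Finset.Ico a j, v t ≤ 1 :=
  Finset.prod_le_one (fun t _ => (hv t).1) (fun t _ => (hv t).2)

/-- the key combinatorial estimate -/
lemma comb {v : ℕ → ℝ} (hv : ∀ t, 0 ≤ v t ∧ v t ≤ 1) (a N : ℕ) (hN : 1 ≤ N) :
    ∑ j ∈ Finset.Ico a N, (8*(1 - v j)*(1+|Real.log (1 - v j)|)) * ∏ t ∈ Finset.Ico a j, v t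
      ≤ 32 + 16 * Real.log N := by
  have hNpos : (0:ℝ) < N := by exact_mod_cast hN
  have hlogN : 0 ≤ Real.log N := Real.log_nonneg (by exact_mod_cast hN)
  have step : ∀ j ∈ Finset.Ico a N,
      (8*(1 - v j)*(1+|Real.log (1 - v j)|)) * ∏ t ∈ Finset.Ico a j, v t
      ≤ (8*(1+2*Real.log N)) * ((1 - v j) * ∏ t ∈ Finset.Ico a j, v t)
        + (24/N) * ∏ t ∈ Finset.Ico a j, v t := by
    intro j _
    have hPn : 0 ≤ ∏ t ∈ Finset.Ico a j, v t := Finset.prod_nonneg fun t _ => (hv t).1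
    have := Gsplit (u := 1 - v j) (by linarith [(hv j).2]) (by linarith [(hv j).1]) hN
    calc (8*(1 - v j)*(1+|Real.log (1 - v j)|)) * ∏ t ∈ Finset.Ico a j, v t
        ≤ (8*(1+2*Real.log N)*(1 - v j) + 24/N) * ∏ t ∈ Finset.Ico a j, v t :=
          mul_le_mul_of_nonneg_right this hPn
      _ = (8*(1+2*Real.log N)) * ((1 - v j) * ∏ t ∈ Finset.Ico a j, v t)
          + (24/N) * ∏ t ∈ Finset.Ico a j, v t := by ring
  calc ∑ j ∈ Finset.Ico a N, (8*(1 - v j)*(1+|Real.log (1 - v j)|)) * ∏ t ∈ Finset.Ico a j, v t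
      ≤ ∑ j ∈ Finset.Ico a N, ((8*(1+2*Real.log N)) * ((1 - v j) * ∏ t ∈ Finset.Ico a j, v t)
          + (24/N) * ∏ t ∈ Finset.Ico a j, v t) := Finset.sum_le_sum step
    _ = (8*(1+2*Real.log N)) * (∑ j ∈ Finset.Ico a N, (1 - v j) * ∏ t ∈ Finset.Ico a j, v t)
        + (24/N) * ∑ j ∈ Finset.Ico a N, ∏ t ∈ Finset.Ico a j, v t := by
          rw [Finset.sum_add_distrib, Finset.mul_sum, Finset.mul_sum]
    _ ≤ (8*(1+2*Real.log N)) * 1 + (24/N) * N := by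
        have b1 := telescope hv a N
        have b2 : ∑ j ∈ Finset.Ico a N, ∏ t ∈ Finset.Ico a j, v t ≤ (N:ℝ) := by
          calc ∑ j ∈ Finset.Ico a N, ∏ t ∈ Finset.Ico a j, v t
              ≤ ∑ j ∈ Finset.Ico a N, 1 := Finset.sum_le_sum fun j _ => prod_le_one' hv a j
            _ = ((Finset.Ico a N).card : ℝ) := by rw [Finset.sum_const]; simp
            _ ≤ (N:ℝ) := by rw [Nat.card_Ico]; exact_mod_cast Nat.sub_le N a
        have c1 : 0 ≤ 8*(1+2*Real.log N) := by positivity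
        have c2 : 0 ≤ 24/(N:ℝ) := by positivity
        have := mul_le_mul_of_nonneg_left b1 c1
        have := mul_le_mul_of_nonneg_left b2 c2
        linarith
    _ = 8 + 16 * Real.log N + 24 := by field_simp; ring
    _ ≤ 32 + 16 * Real.log N := by linarith

end MAux


namespace MAux
open Finset Real

variable (p q : ℕ → ℝ)

def Wf (k : ℕ) (ε : Fin (k+1) → Bool) : ℝ :=
  -Real.log (trans p q k (lst (Fin.init ε)) (ε (Fin.last k)))

def fE (k : ℕ) (ε : Fin k → Bool) : ℝ :=
  ∑ b : Bool, trans p q k (lst ε) b * (-Real.log (trans p q k (lst ε) b))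

def Ind (k : ℕ) (ε : Fin (k+1) → Bool) : ℝ := if ε (Fin.last k) = false then 1 else 0

def piv (k : ℕ) : ℝ := Ex p q (k+1) (Ind k)

def chi (k : ℕ) (ε : Fin (k+1) → Bool) : ℝ := Ind k ε - piv p q k

def lam : ℕ → ℝ
  | 0 => 0
  | (k+1) => p (k+1) - q (k+1)

def eta : ∀ (k : ℕ), (Fin (k+1) → Bool) → ℝ
  | 0 => chi p q 0
  | (k+1) => fun ε => chi p q (k+1) ε - lam p q (k+1) * chi p q k (Fin.init ε)

def cg (k : ℕ) : ℝ := H (p k) - H (q k)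

def Gam (i N : ℕ) : ℝ :=
  ∑ j ∈ Finset.Ico (i+1) N, cg p q j * ∏ t ∈ Finset.Ico (i+1) j, lam p q t

def Yf (N : ℕ) : (Fin N → Bool) → ℝ := liftSum (Wf p q) N

def eW (k : ℕ) : ℝ := Ex p q (k+1) (Wf p q k)

def Dfam (N k : ℕ) (ε : Fin (k+1) → Bool) : ℝ :=
  (Wf p q k ε - fE p q k (Fin.init ε)) + Gam p q k N * eta p q k ε

variable {p q}

lemma lst_eq {k : ℕ} (ε : Fin (k+1) → Bool) : lst ε = ε (Fin.last k) := rfl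

lemma lam_succ (k : ℕ) : lam p q (k+1) = p (k+1) - q (k+1) := rfl

lemma Wf_snoc (k : ℕ) (ε : Fin k → Bool) (b : Bool) :
    Wf p q k (Fin.snoc ε b) = -Real.log (trans p q k (lst ε) b) := by
  unfold Wf
  rw [Fin.init_snoc, Fin.snoc_last]

lemma fE_eq_H (k : ℕ) (ε : Fin k → Bool) : fE p q k ε = H (trans p q k (lst ε) false) := by
  unfold fE
  rw [Fintype.sum_bool, trans_true]
  unfold H; ring

lemma Ind_snoc (k : ℕ) (ε : Fin k → Bool) (b : Bool) :
    Ind k (Fin.snoc ε b) = if b = false then (1:ℝ) else 0 := by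
  unfold Ind; rw [Fin.snoc_last]

lemma trans_succ_false (k : ℕ) (e : Bool) :
    trans p q (k+1) e false = if e = false then p (k+1) else q (k+1) := by
  cases e <;> rfl

lemma trans_zero_false (e : Bool) : trans p q 0 e false = p 0 := rfl

variable (hp : ∀ n, p n ∈ Set.Icc (0:ℝ) 1) (hq : ∀ n, q n ∈ Set.Icc (0:ℝ) 1)
include hp hq

lemma fE_nonneg (k : ℕ) (ε : Fin k → Bool) : 0 ≤ fE p q k ε := by
  apply Finset.sum_nonneg
  intro b _
  have h0 := trans_nonneg hp hq k (lst ε) b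
  have h1 := trans_le_one hp hq k (lst ε) b
  have := neg_mul_log_nonneg h0 h1
  nlinarith

lemma fE_le_four (k : ℕ) (ε : Fin k → Bool) : fE p q k ε ≤ 4 := by
  rw [fE_eq_H]
  exact H_le_four (trans_nonneg hp hq k (lst ε) false) (trans_le_one hp hq k (lst ε) false)

lemma Mdiff_dW (k : ℕ) : Mdiff p q k (fun ε => Wf p q k ε - fE p q k (Fin.init ε)) := by
  intro ε
  have e1 : ∀ b : Bool, trans p q k (lst ε) b *
      ((fun ε' => Wf p q k ε' - fE p q k (Fin.init ε')) (Fin.snoc ε b))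
      = trans p q k (lst ε) b * (-Real.log (trans p q k (lst ε) b))
        - trans p q k (lst ε) b * fE p q k ε := by
    intro b
    simp only [Wf_snoc, Fin.init_snoc]
    ring
  rw [Finset.sum_congr rfl fun b _ => e1 b, Finset.sum_sub_distrib, ← Finset.sum_mul,
    trans_sum hp hq, one_mul, sub_eq_zero]
  rfl

lemma piv_mem (k : ℕ) : piv p q k ∈ Set.Icc (0:ℝ) 1 := by
  constructor
  · exact Ex_nonneg hp hq _ (fun ε => by unfold Ind; split <;> norm_num)
  · exact Ex_le_const hp hq _ (fun ε => by unfold Ind; split <;> norm_num)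

lemma piv_zero : piv p q 0 = p 0 := by
  unfold piv
  rw [tower, Ex_zero]
  simp only [Ind_snoc]
  rw [Fintype.sum_bool]
  norm_num
  rfl

lemma piv_succ (k : ℕ) : piv p q (k+1) = p (k+1) * piv p q k + q (k+1) * (1 - piv p q k) := by
  have e1 : ∀ ε : Fin (k+1) → Bool,
      (∑ b : Bool, trans p q (k+1) (lst ε) b * Ind (k+1) (Fin.snoc ε b))
      = q (k+1) + (p (k+1) - q (k+1)) * Ind k ε := by
    intro ε
    rw [Fintype.sum_bool, Ind_snoc, Ind_snoc, trans_succ_false, lst_eq]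
    unfold Ind
    cases h : ε (Fin.last k) <;> simp [h] <;> ring
  show Ex p q (k+2) (Ind (k+1)) = _
  rw [tower, Ex_congr e1, Ex_add, Ex_const hp hq, Ex_smul]
  show q (k+1) + (p (k+1) - q (k+1)) * piv p q k = _
  ring

lemma Mdiff_eta_zero : Mdiff p q 0 (eta p q 0) := by
  intro ε
  have e1 : ∀ b : Bool, eta p q 0 (Fin.snoc ε b)
      = (if b = false then (1:ℝ) else 0) - piv p q 0 := by
    intro b
    show Ind 0 (Fin.snoc ε b) - piv p q 0 = _
    rw [Ind_snoc]
  rw [Finset.sum_congr rfl fun b _ => by rw [e1 b], Fintype.sum_bool, trans_true,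
    trans_zero_false, piv_zero hp hq]
  norm_num
  ring

lemma Mdiff_eta_succ (k : ℕ) : Mdiff p q (k+1) (eta p q (k+1)) := by
  intro ε
  have e1 : ∀ b : Bool, eta p q (k+1) (Fin.snoc ε b)
      = ((if b = false then (1:ℝ) else 0) - piv p q (k+1)) - lam p q (k+1) * chi p q k ε := by
    intro b
    show chi p q (k+1) (Fin.snoc ε b : Fin (k+2) → Bool)
        - lam p q (k+1) * chi p q k (Fin.init (Fin.snoc ε b : Fin (k+2) → Bool)) = _
    rw [Fin.init_snoc]
    show Ind (k+1) (Fin.snoc ε b : Fin (k+2) → Bool) - piv p q (k+1) - _ = _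
    rw [Ind_snoc]
  rw [Finset.sum_congr rfl fun b _ => by rw [e1 b], Fintype.sum_bool, trans_true,
    trans_succ_false, piv_succ hp hq k, lst_eq, lam_succ]
  unfold chi Ind
  cases h : ε (Fin.last k) <;> simp [h] <;> ring

lemma Mdiff_eta (k : ℕ) : Mdiff p q k (eta p q k) := by
  cases k with
  | zero => exact Mdiff_eta_zero hp hq
  | succ k => exact Mdiff_eta_succ hp hq k

omit hp hq

lemma Mdiff_add {k : ℕ} {d1 d2 : (Fin (k+1) → Bool) → ℝ}
    (h1 : Mdiff p q k d1) (h2 : Mdiff p q k d2) :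
    Mdiff p q k (fun ε => d1 ε + d2 ε) := by
  intro ε
  have e1 : ∀ b : Bool, trans p q k (lst ε) b * ((fun ε' => d1 ε' + d2 ε') (Fin.snoc ε b))
      = trans p q k (lst ε) b * d1 (Fin.snoc ε b) + trans p q k (lst ε) b * d2 (Fin.snoc ε b) := by
    intro b; simp only []; ring
  rw [Finset.sum_congr rfl fun b _ => e1 b, Finset.sum_add_distrib, h1 ε, h2 ε, add_zero]

lemma Mdiff_smul {k : ℕ} (r : ℝ) {d : (Fin (k+1) → Bool) → ℝ} (h : Mdiff p q k d) :
    Mdiff p q k (fun ε => r * d ε) := by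
  intro ε
  have e1 : ∀ b : Bool, trans p q k (lst ε) b * ((fun ε' => r * d ε') (Fin.snoc ε b))
      = r * (trans p q k (lst ε) b * d (Fin.snoc ε b)) := by
    intro b; simp only []; ring
  rw [Finset.sum_congr rfl fun b _ => e1 b, ← Finset.mul_sum, h ε, mul_zero]

include hp hq

lemma Mdiff_Dfam (N k : ℕ) : Mdiff p q k (Dfam p q N k) :=
  Mdiff_add (Mdiff_dW hp hq k) (Mdiff_smul (Gam p q k N) (Mdiff_eta hp hq k))

omit hp hq

lemma chi_expand : ∀ (m : ℕ) (ε : Fin (m+1) → Bool),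
    liftSum (fun k ε' => (∏ t ∈ Finset.Ico (k+1) (m+1), lam p q t) * eta p q k ε') (m+1) ε
      = chi p q m ε
  | 0, ε => by
    show (0:ℝ) + (∏ t ∈ Finset.Ico 1 1, lam p q t) * eta p q 0 ε = chi p q 0 ε
    rw [Finset.Ico_self, Finset.prod_empty, one_mul, zero_add]
    rfl
  | (m+1), ε => by
    show liftSum _ (m+1) (Fin.init ε)
        + (∏ t ∈ Finset.Ico (m+2) (m+2), lam p q t) * eta p q (m+1) ε = _
    rw [Finset.Ico_self, Finset.prod_empty, one_mul]
    have hcong : ∀ k < m+1, ∀ ε' : Fin (k+1) → Bool,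
        (∏ t ∈ Finset.Ico (k+1) (m+2), lam p q t) * eta p q k ε'
        = lam p q (m+1) * ((∏ t ∈ Finset.Ico (k+1) (m+1), lam p q t) * eta p q k ε') := by
      intro k hk ε'
      rw [Finset.prod_Ico_succ_top (by omega : k+1 ≤ m+1)]
      ring
    rw [liftSum_congr (m+1) hcong (Fin.init ε), liftSum_smul, chi_expand m (Fin.init ε)]
    have heta : eta p q (m+1) ε = chi p q (m+1) ε - lam p q (m+1) * chi p q m (Fin.init ε) := rfl
    rw [heta]; ring

include hp hq

lemma eW_eq_Ex_fE (k : ℕ) : eW p q k = Ex p q k (fE p q k) := by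
  unfold eW
  rw [tower]
  refine Ex_congr (fun ε => ?_)
  unfold fE
  exact Finset.sum_congr rfl fun b _ => by rw [Wf_snoc]

lemma Ex_Yf_eq (N : ℕ) : Ex p q N (Yf p q N) = ∑ k ∈ Finset.range N, eW p q k := by
  induction N with
  | zero =>
    rw [Finset.range_zero, Finset.sum_empty]
    show Ex p q 0 (fun _ => (0:ℝ)) = 0
    rw [Ex_const hp hq]
  | succ N ih =>
    have h0 : Ex p q (N+1) (Yf p q (N+1))
        = Ex p q (N+1) (fun ε => Yf p q N (Fin.init ε) + Wf p q N ε) := rfl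
    rw [h0, Ex_add, Ex_comp_init hp hq, ih, Finset.sum_range_succ]
    rfl

lemma fE_affine (k : ℕ) (ε : Fin (k+1) → Bool) :
    fE p q (k+1) ε = H (q (k+1)) + cg p q (k+1) * Ind k ε := by
  rw [fE_eq_H, trans_succ_false, lst_eq]
  unfold Ind cg
  cases h : ε (Fin.last k) <;> simp [h] <;> ring

lemma eW_succ (k : ℕ) : eW p q (k+1) = H (q (k+1)) + cg p q (k+1) * piv p q k := by
  rw [eW_eq_Ex_fE hp hq, Ex_congr (fE_affine hp hq k), Ex_add, Ex_const hp hq, Ex_smul]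
  rfl

lemma fE_decomp (k : ℕ) (ε : Fin (k+1) → Bool) :
    fE p q (k+1) ε = eW p q (k+1) + cg p q (k+1) * chi p q k ε := by
  rw [fE_affine hp hq, eW_succ hp hq]
  unfold chi; ring

lemma fE_zero (ε : Fin 0 → Bool) : fE p q 0 ε = H (p 0) := by
  rw [fE_eq_H]
  rfl

lemma eW_zero : eW p q 0 = H (p 0) := by
  rw [eW_eq_Ex_fE hp hq, Ex_congr (fun ε => fE_zero hp hq ε), Ex_const hp hq]

omit hp hq in
lemma Gam_succ (k N : ℕ) (h : k < N) :
    Gam p q k (N+1) = Gam p q k N + cg p q N * ∏ t ∈ Finset.Ico (k+1) N, lam p q t := by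
  unfold Gam
  rw [Finset.sum_Ico_succ_top (by omega : k+1 ≤ N)]

omit hp hq in
lemma Gam_self (N : ℕ) : Gam p q N (N+1) = 0 := by
  unfold Gam
  rw [Finset.Ico_self, Finset.sum_empty]

lemma central : ∀ (N : ℕ) (ε : Fin N → Bool),
    liftSum (Dfam p q N) N ε = Yf p q N ε - Ex p q N (Yf p q N)
  | 0, ε => by
    show (0:ℝ) = 0 - Ex p q 0 (Yf p q 0)
    have : Ex p q 0 (Yf p q 0) = 0 := by
      show Ex p q 0 (fun _ => (0:ℝ)) = 0
      rw [Ex_const hp hq]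
    rw [this]; ring
  | (N+1), ε => by
    have hEx : Ex p q (N+1) (Yf p q (N+1)) = Ex p q N (Yf p q N) + eW p q N := by
      have h0 : Ex p q (N+1) (Yf p q (N+1))
          = Ex p q (N+1) (fun ε => Yf p q N (Fin.init ε) + Wf p q N ε) := rfl
      rw [h0, Ex_add, Ex_comp_init hp hq]
      rfl
    have hY : Yf p q (N+1) ε = Yf p q N (Fin.init ε) + Wf p q N ε := rfl
    have hD : Dfam p q (N+1) N ε = Wf p q N ε - fE p q N (Fin.init ε) := by
      unfold Dfam
      rw [Gam_self, zero_mul, add_zero]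
    have hcong : ∀ k < N, ∀ ε' : Fin (k+1) → Bool,
        Dfam p q (N+1) k ε' = Dfam p q N k ε'
          + cg p q N * ((∏ t ∈ Finset.Ico (k+1) N, lam p q t) * eta p q k ε') := by
      intro k hk ε'
      unfold Dfam
      rw [Gam_succ k N hk]
      ring
    have hLS : liftSum (Dfam p q (N+1)) (N+1) ε
        = liftSum (Dfam p q (N+1)) N (Fin.init ε) + Dfam p q (N+1) N ε := rfl
    rw [hLS, hD,
      liftSum_congr N hcong (Fin.init ε), liftSum_add, liftSum_smul,
      central N (Fin.init ε), hY, hEx]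
    cases N with
    | zero =>
      have h1 : liftSum (fun k ε' => (∏ t ∈ Finset.Ico (k+1) 0, lam p q t) * eta p q k ε') 0
          (Fin.init ε) = 0 := rfl
      have h2 : fE p q 0 (Fin.init ε) = eW p q 0 := by
        rw [fE_zero hp hq, eW_zero hp hq]
      rw [h1, h2]; ring
    | succ m =>
      rw [chi_expand m (Fin.init ε), fE_decomp hp hq m (Fin.init ε)]
      ring

end MAux


namespace MAux
open Finset Real

variable {p q : ℕ → ℝ}
variable (hp : ∀ n, p n ∈ Set.Icc (0:ℝ) 1) (hq : ∀ n, q n ∈ Set.Icc (0:ℝ) 1)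

def VarY (P Q : ℕ → ℝ) (N : ℕ) : ℝ :=
  Ex P Q N (fun ε => (Yf P Q N ε - Ex P Q N (Yf P Q N))^2)

include hp hq

lemma Wf_nonneg (k : ℕ) (ε : Fin (k+1) → Bool) : 0 ≤ Wf p q k ε := by
  unfold Wf
  have h0 := trans_nonneg hp hq k (lst (Fin.init ε)) (ε (Fin.last k))
  have h1 := trans_le_one hp hq k (lst (Fin.init ε)) (ε (Fin.last k))
  have := Real.log_nonpos h0 h1
  linarith

lemma Yf_nonneg : ∀ (N : ℕ) (ε : Fin N → Bool), 0 ≤ Yf p q N ε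
  | 0, _ => le_refl 0
  | N+1, ε => by
    have h1 : Yf p q (N+1) ε = Yf p q N (Fin.init ε) + Wf p q N ε := rfl
    rw [h1]
    have := Yf_nonneg N (Fin.init ε)
    have := Wf_nonneg hp hq N ε
    linarith

lemma eW_nonneg (k : ℕ) : 0 ≤ eW p q k :=
  Ex_nonneg hp hq _ (fun ε => Wf_nonneg hp hq k ε)

lemma eW_le_four (k : ℕ) : eW p q k ≤ 4 := by
  rw [eW_eq_Ex_fE hp hq]
  exact Ex_le_const hp hq _ (fun ε => fE_le_four hp hq k ε)

lemma Ex_Yf_nonneg (N : ℕ) : 0 ≤ Ex p q N (Yf p q N) :=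
  Ex_nonneg hp hq _ (fun ε => Yf_nonneg hp hq N ε)

lemma Ex_Yf_le (N : ℕ) : Ex p q N (Yf p q N) ≤ 4 * N := by
  rw [Ex_Yf_eq hp hq]
  calc ∑ k ∈ Finset.range N, eW p q k ≤ ∑ k ∈ Finset.range N, 4 :=
        Finset.sum_le_sum fun k _ => eW_le_four hp hq k
    _ = 4 * N := by rw [Finset.sum_const, Finset.card_range]; ring

lemma Ex_Wsq_le (k : ℕ) : Ex p q (k+1) (fun ε => (Wf p q k ε)^2) ≤ 8 := by
  rw [tower]
  apply Ex_le_const hp hq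
  intro ε
  have hb : ∀ b : Bool, trans p q k (lst ε) b * ((Wf p q k (Fin.snoc ε b))^2) ≤ 4 := by
    intro b
    rw [Wf_snoc]
    have h0 := trans_nonneg hp hq k (lst ε) b
    have h1 := trans_le_one hp hq k (lst ε) b
    have h2 := mul_sq_log_le h0 h1
    calc trans p q k (lst ε) b * (-Real.log (trans p q k (lst ε) b))^2
        = trans p q k (lst ε) b * (Real.log (trans p q k (lst ε) b))^2 := by ring
      _ ≤ 4 := h2
  simp only [Fintype.sum_bool]
  linarith [hb true, hb false]

lemma abs_chi_le (k : ℕ) (ε : Fin (k+1) → Bool) : |chi p q k ε| ≤ 1 := by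
  obtain ⟨h0, h1⟩ := piv_mem hp hq (p := p) (q := q) k
  unfold chi Ind
  rw [abs_le]
  split <;> constructor <;> linarith

lemma abs_lam_le (k : ℕ) : |lam p q k| ≤ 1 := by
  cases k with
  | zero => simp [lam]
  | succ k =>
    obtain ⟨a0, a1⟩ := hp (k+1); obtain ⟨b0, b1⟩ := hq (k+1)
    rw [lam_succ, abs_le]
    constructor <;> linarith

lemma eta_sq_le (k : ℕ) (ε : Fin (k+1) → Bool) : (eta p q k ε)^2 ≤ 4 := by
  have habs : |eta p q k ε| ≤ 2 := by
    cases k with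
    | zero =>
      have := abs_chi_le hp hq 0 ε
      have he : eta p q 0 ε = chi p q 0 ε := rfl
      rw [he]; linarith
    | succ k =>
      have h1 := abs_chi_le hp hq (k+1) ε
      have h2 := abs_chi_le hp hq k (Fin.init ε)
      have h3 := abs_lam_le hp hq (p := p) (q := q) (k+1)
      have he : eta p q (k+1) ε
          = chi p q (k+1) ε - lam p q (k+1) * chi p q k (Fin.init ε) := rfl
      rw [he]
      calc |chi p q (k+1) ε - lam p q (k+1) * chi p q k (Fin.init ε)|
          ≤ |chi p q (k+1) ε| + |lam p q (k+1) * chi p q k (Fin.init ε)| := abs_sub _ _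
        _ = |chi p q (k+1) ε| + |lam p q (k+1)| * |chi p q k (Fin.init ε)| := by rw [abs_mul]
        _ ≤ 2 := by nlinarith [abs_nonneg (lam p q (k+1)), abs_nonneg (chi p q k (Fin.init ε))]
  nlinarith [abs_nonneg (eta p q k ε), sq_abs (eta p q k ε)]

lemma Gam_abs_le (i N : ℕ) (hN : 1 ≤ N) : |Gam p q i N| ≤ 32 + 16 * Real.log N := by
  have hv : ∀ t, 0 ≤ |lam p q t| ∧ |lam p q t| ≤ 1 :=
    fun t => ⟨abs_nonneg _, abs_lam_le hp hq t⟩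
  calc |Gam p q i N|
      ≤ ∑ j ∈ Finset.Ico (i+1) N, |cg p q j * ∏ t ∈ Finset.Ico (i+1) j, lam p q t| :=
        Finset.abs_sum_le_sum_abs _ _
    _ ≤ ∑ j ∈ Finset.Ico (i+1) N,
          (8*(1 - |lam p q j|)*(1+|Real.log (1 - |lam p q j|)|))
            * ∏ t ∈ Finset.Ico (i+1) j, |lam p q t| := by
        apply Finset.sum_le_sum
        intro j hj
        rw [abs_mul, Finset.abs_prod]
        have hprod0 : 0 ≤ ∏ t ∈ Finset.Ico (i+1) j, |lam p q t| :=
          Finset.prod_nonneg fun t _ => abs_nonneg _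
        have hG0 : 0 ≤ 8*(1 - |lam p q j|)*(1+|Real.log (1 - |lam p q j|)|) := by
          have hu0 : 0 ≤ 1 - |lam p q j| := by linarith [(hv j).2]
          positivity
        apply mul_le_mul _ le_rfl hprod0 hG0
        obtain ⟨hj1, _⟩ := Finset.mem_Ico.mp hj
        obtain ⟨m, rfl⟩ : ∃ m, j = m+1 := ⟨j-1, by omega⟩
        have h := abs_H_sub_le (hp (m+1)) (hq (m+1))
        have hl : lam p q (m+1) = p (m+1) - q (m+1) := rfl
        have hc : cg p q (m+1) = H (p (m+1)) - H (q (m+1)) := rfl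
        rw [hc, hl]
        exact h
    _ ≤ 32 + 16 * Real.log N := comb hv (i+1) N hN

lemma Ex_dWsq_le (k : ℕ) :
    Ex p q (k+1) (fun ε => (Wf p q k ε - fE p q k (Fin.init ε))^2) ≤ 48 := by
  have hpt2 : ∀ ε : Fin (k+1) → Bool, (Wf p q k ε - fE p q k (Fin.init ε))^2
      ≤ 2*(Wf p q k ε)^2 + (fun ε' => 2*(fE p q k ε')^2) (Fin.init ε) := by
    intro ε
    simp only []
    nlinarith [sq_nonneg (Wf p q k ε + fE p q k (Fin.init ε))]
  apply le_trans (Ex_le_Ex hp hq _ hpt2)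
  have hci : Ex p q (k+1) (fun ε => (fun ε' => 2*(fE p q k ε')^2) (Fin.init ε))
      = Ex p q k (fun ε' => 2*(fE p q k ε')^2) :=
    Ex_comp_init hp hq k (fun ε' => 2*(fE p q k ε')^2)
  rw [Ex_add, Ex_smul, hci]
  have b1 := Ex_Wsq_le hp hq k
  have b2 : Ex p q k (fun ε' => 2*(fE p q k ε')^2) ≤ 32 := by
    apply Ex_le_const hp hq
    intro ε'
    have := fE_nonneg hp hq k ε'
    have := fE_le_four hp hq k ε'
    nlinarith
  linarith

lemma Ex_Dsq_le (N k : ℕ) (hN : 1 ≤ N) :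
    Ex p q (k+1) (fun ε => (Dfam p q N k ε)^2)
      ≤ 96 + 8*(32 + 16*Real.log N)^2 := by
  have hpt : ∀ ε : Fin (k+1) → Bool, (Dfam p q N k ε)^2
      ≤ 2*(Wf p q k ε - fE p q k (Fin.init ε))^2
        + (2*(Gam p q k N)^2) * (eta p q k ε)^2 := by
    intro ε
    unfold Dfam
    nlinarith [sq_nonneg ((Wf p q k ε - fE p q k (Fin.init ε)) - Gam p q k N * eta p q k ε)]
  apply le_trans (Ex_le_Ex hp hq _ hpt)
  rw [Ex_add, Ex_smul, Ex_smul]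
  have b1 := Ex_dWsq_le hp hq k
  have b2 : Ex p q (k+1) (fun ε => (eta p q k ε)^2) ≤ 4 :=
    Ex_le_const hp hq _ (fun ε => eta_sq_le hp hq k ε)
  have b2' : 0 ≤ Ex p q (k+1) (fun ε => (eta p q k ε)^2) :=
    Ex_nonneg hp hq _ (fun ε => sq_nonneg _)
  have b3 := Gam_abs_le hp hq (p := p) (q := q) k N hN
  have hlogN : 0 ≤ Real.log N := Real.log_nonneg (by exact_mod_cast hN)
  have b4 : (Gam p q k N)^2 ≤ (32+16*Real.log N)^2 := by
    have h := abs_le.mp b3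
    nlinarith [h.1, h.2]
  have b5 : (2*(Gam p q k N)^2) * Ex p q (k+1) (fun ε => (eta p q k ε)^2)
      ≤ (2*(Gam p q k N)^2) * 4 :=
    mul_le_mul_of_nonneg_left b2 (by positivity)
  linarith [b1, b4, b5]

lemma VarY_le (N : ℕ) (hN : 1 ≤ N) :
    VarY p q N ≤ (96 + 8*(32 + 16*Real.log N)^2) * N := by
  unfold VarY
  have hid : ∀ ε : Fin N → Bool, (Yf p q N ε - Ex p q N (Yf p q N))^2
      = (liftSum (Dfam p q N) N ε)^2 := fun ε => by rw [central hp hq N ε]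
  rw [Ex_congr hid, Ex_liftSum_sq hp hq _ (fun k => Mdiff_Dfam hp hq N k)]
  calc ∑ k ∈ Finset.range N, Ex p q (k+1) (fun ε => (Dfam p q N k ε)^2)
      ≤ ∑ _k ∈ Finset.range N, (96 + 8*(32 + 16*Real.log N)^2) :=
        Finset.sum_le_sum fun k _ => Ex_Dsq_le hp hq N k hN
    _ = (96 + 8*(32 + 16*Real.log N)^2) * N := by
        rw [Finset.sum_const, Finset.card_range, nsmul_eq_mul]; ring

end MAux

open MeasureTheory Filter Topology
namespace MAux
open Finset Real

open Finset Real

lemma measurableSet_cyl {n : ℕ} (ε : Fin n → Bool) : MeasurableSet (cyl ε) := by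
  have h : cyl ε = ⋂ i : Fin n, ((fun x : K => x i) ⁻¹' {ε i}) := by
    ext x; simp [cyl, Set.mem_iInter]
  rw [h]
  exact MeasurableSet.iInter fun i => (measurable_pi_apply (i : ℕ)) (measurableSet_singleton _)

lemma cyl_disjoint {n : ℕ} {ε η : Fin n → Bool} (h : ε ≠ η) : Disjoint (cyl ε) (cyl η) := by
  rw [Set.disjoint_left]
  intro x hx hy
  apply h
  funext i
  rw [← hx i, ← hy i]

lemma mem_cyl_iff {n : ℕ} (ε : Fin n → Bool) (x : K) :
    x ∈ cyl ε ↔ (fun i : Fin n => x i) = ε := by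
  constructor
  · intro h; funext i; exact h i
  · intro h i; rw [← h]

variable {p q : ℕ → ℝ} {μ : Measure K} [IsProbabilityMeasure μ]
variable (hp : ∀ n, p n ∈ Set.Icc (0:ℝ) 1) (hq : ∀ n, q n ∈ Set.Icc (0:ℝ) 1)
variable (hM : MarkovMeasure μ p q)
include hp hq hM

lemma mu_cyl : ∀ (n : ℕ) (ε : Fin n → Bool), μ (cyl ε) = ENNReal.ofReal (rho p q ε)
  | 0, ε => by
    have h1 : cyl ε = Set.univ := Set.eq_univ_of_forall (fun x i => i.elim0)
    have h2 : rho p q ε = 1 := rfl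
    rw [h1, h2, measure_univ, ENNReal.ofReal_one]
  | 1, ε => by
    have h2 : rho p q ε = trans p q 0 false (ε 0) := by
      show rho p q (Fin.init ε) * trans p q 0 (lst (Fin.init ε)) (ε (Fin.last 0))
        = trans p q 0 false (ε 0)
      have : rho p q (Fin.init ε) = 1 := rfl
      rw [this, one_mul]
      rfl
    cases h : ε 0 with
    | false =>
      have hε : ε = ![false] := by
        funext i
        have hi : i = 0 := Subsingleton.elim i 0
        rw [hi, h]; rfl
      rw [hε] at h2 h ⊢
      rw [hM.1, h2, h]
      rfl
    | true =>
      have hε : ε = ![true] := by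
        funext i
        have hi : i = 0 := Subsingleton.elim i 0
        rw [hi, h]; rfl
      rw [hε] at h2 h ⊢
      rw [hM.2.1, h2, h]
      rfl
  | (n+2), ε => by
    have hsnoc : ε = Fin.snoc (Fin.init ε) (ε (Fin.last (n+1))) := (Fin.snoc_init_self ε).symm
    rw [hsnoc, hM.2.2 n (Fin.init ε) (ε (Fin.last (n+1))),
      mu_cyl (n+1) (Fin.init ε), rho_snoc,
      ← ENNReal.ofReal_mul (rho_nonneg hp hq (Fin.init ε))]
    rfl

lemma mu_cyl_toReal (n : ℕ) (ε : Fin n → Bool) : (μ (cyl ε)).toReal = rho p q ε := by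
  rw [mu_cyl hp hq hM n ε, ENNReal.toReal_ofReal (rho_nonneg hp hq ε)]

omit hp hq hM

lemma measure_setOf_word (N : ℕ) (P : (Fin N → Bool) → Prop) [DecidablePred P] :
    μ {x : K | P (fun i : Fin N => x i)} = ∑ ε ∈ Finset.univ.filter P, μ (cyl ε) := by
  have hset : {x : K | P (fun i : Fin N => x i)} = ⋃ ε ∈ Finset.univ.filter P, cyl ε := by
    ext x
    simp only [Set.mem_setOf_eq, Set.mem_iUnion, Finset.mem_filter, Finset.mem_univ, true_and]
    constructor
    · intro h
      exact ⟨(fun i => x i), h, fun i => rfl⟩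
    · rintro ⟨ε, hP, hx⟩
      rwa [(mem_cyl_iff ε x).mp hx]
  rw [hset]
  rw [measure_biUnion_finset ?_ (fun ε _ => measurableSet_cyl ε)]
  intro ε _ η _ hne
  exact cyl_disjoint hne

include hp hq hM

/-- Chebyshev inequality -/
lemma cheb (N : ℕ) {t : ℝ} (ht : 0 < t) :
    μ {x : K | t ≤ |Yf p q N (fun i : Fin N => x i) - Ex p q N (Yf p q N)|}
      ≤ ENNReal.ofReal (VarY p q N / t^2) := by
  classical
  rw [measure_setOf_word N (fun ε => t ≤ |Yf p q N ε - Ex p q N (Yf p q N)|)]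
  have hcyl : ∀ ε : Fin N → Bool, μ (cyl ε) = ENNReal.ofReal (rho p q ε) :=
    fun ε => mu_cyl hp hq hM N ε
  rw [Finset.sum_congr rfl (fun ε _ => hcyl ε),
    ← ENNReal.ofReal_sum_of_nonneg (fun ε _ => rho_nonneg hp hq ε)]
  apply ENNReal.ofReal_le_ofReal
  set E := Ex p q N (Yf p q N)
  have step1 : ∑ ε ∈ Finset.univ.filter (fun ε => t ≤ |Yf p q N ε - E|), rho p q ε
      ≤ ∑ ε ∈ Finset.univ.filter (fun ε => t ≤ |Yf p q N ε - E|),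
          rho p q ε * ((Yf p q N ε - E)^2 / t^2) := by
    apply Finset.sum_le_sum
    intro ε hε
    have hP := (Finset.mem_filter.mp hε).2
    have h2 : t^2 ≤ (Yf p q N ε - E)^2 := by
      have := abs_nonneg (Yf p q N ε - E)
      nlinarith [sq_abs (Yf p q N ε - E)]
    have h3 : (1:ℝ) ≤ (Yf p q N ε - E)^2 / t^2 := by
      rw [le_div_iff₀ (by positivity)]
      linarith
    have h4 := rho_nonneg hp hq (p := p) (q := q) ε
    nlinarith
  have step2 : ∑ ε ∈ Finset.univ.filter (fun ε => t ≤ |Yf p q N ε - E|),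
        rho p q ε * ((Yf p q N ε - E)^2 / t^2)
      ≤ ∑ ε : Fin N → Bool, rho p q ε * ((Yf p q N ε - E)^2 / t^2) := by
    apply Finset.sum_le_sum_of_subset_of_nonneg (Finset.filter_subset _ _)
    intro ε _ _
    have h4 := rho_nonneg hp hq (p := p) (q := q) ε
    positivity
  have step3 : ∑ ε : Fin N → Bool, rho p q ε * ((Yf p q N ε - E)^2 / t^2)
      = VarY p q N / t^2 := by
    have hv : VarY p q N = ∑ ε : Fin N → Bool, rho p q ε * (Yf p q N ε - E)^2 := rfl
    rw [hv, Finset.sum_div]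
    exact Finset.sum_congr rfl fun ε _ => by ring
  linarith

omit hM

lemma Yf_eq_neg_log : ∀ (N : ℕ) (ε : Fin N → Bool), 0 < rho p q ε →
    Yf p q N ε = -Real.log (rho p q ε)
  | 0, ε, _ => by
    have h2 : rho p q ε = 1 := rfl
    rw [h2, Real.log_one, neg_zero]
    rfl
  | (N+1), ε, hpos => by
    have hr : rho p q ε = rho p q (Fin.init ε)
        * trans p q N (lst (Fin.init ε)) (ε (Fin.last N)) := rfl
    have ha := rho_nonneg hp hq (Fin.init ε)
    have hb := trans_nonneg hp hq N (lst (Fin.init ε)) (ε (Fin.last N))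
    rw [hr] at hpos
    have h1a : 0 < rho p q (Fin.init ε) := by
      rcases eq_or_lt_of_le ha with h|h
      · rw [← h, zero_mul] at hpos; exact absurd hpos (lt_irrefl 0)
      · exact h
    have h1b : 0 < trans p q N (lst (Fin.init ε)) (ε (Fin.last N)) := by
      rcases eq_or_lt_of_le hb with h|h
      · rw [← h, mul_zero] at hpos; exact absurd hpos (lt_irrefl 0)
      · exact h
    have hY : Yf p q (N+1) ε = Yf p q N (Fin.init ε) + Wf p q N ε := rfl
    rw [hY, Yf_eq_neg_log N (Fin.init ε) h1a, hr,
      Real.log_mul (ne_of_gt h1a) (ne_of_gt h1b)]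
    unfold Wf
    ring

include hM

lemma entropySum_eq (n : ℕ) : entropySum μ n = - Ex p q n (Yf p q n) := by
  unfold entropySum Ex
  rw [← Finset.sum_neg_distrib]
  apply Finset.sum_congr rfl
  intro ε _
  rw [mu_cyl_toReal hp hq hM n ε]
  rcases eq_or_lt_of_le (rho_nonneg hp hq (p := p) (q := q) ε) with h|h
  · rw [← h]; simp
  · rw [Yf_eq_neg_log hp hq n ε h]; ring

lemma ae_cyl_pos : ∀ᵐ x ∂μ, ∀ n : ℕ, μ (cylAt x n) ≠ 0 := by
  have hnull : μ (⋃ (n : ℕ), ⋃ (ε ∈ {ε : Fin n → Bool | μ (cyl ε) = 0}), cyl ε) = 0 := by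
    apply measure_iUnion_null
    intro n
    rw [measure_biUnion_null_iff (Set.to_countable _)]
    exact fun ε hε => hε
  rw [ae_iff]
  refine measure_mono_null ?_ hnull
  intro x hx
  simp only [Set.mem_setOf_eq, not_forall, not_not] at hx
  obtain ⟨n, hn⟩ := hx
  refine Set.mem_iUnion.2 ⟨n, Set.mem_iUnion₂.2 ⟨(fun i => x i), hn, ?_⟩⟩
  intro i; rfl

end MAux


open MeasureTheory Filter Topology
open scoped ENNReal NNReal

namespace MAux
open Finset Real

variable {p q : ℕ → ℝ}
variable (hp : ∀ n, p n ∈ Set.Icc (0:ℝ) 1) (hq : ∀ n, q n ∈ Set.Icc (0:ℝ) 1)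

lemma sq_log_le_sqrt {N : ℕ} (hN : 1 ≤ N) : (Real.log N)^2 ≤ 16 * Real.sqrt N := by
  have h1 : (1:ℝ) ≤ (N:ℝ) := by exact_mod_cast hN
  have hN0 : (0:ℝ) < N := by linarith
  have h2 : 0 ≤ Real.log N := Real.log_nonneg h1
  have hs : 0 < Real.sqrt (Real.sqrt N) := Real.sqrt_pos.2 (Real.sqrt_pos.2 hN0)
  have h3 : Real.log N ≤ 4 * Real.sqrt (Real.sqrt N) := by
    have h4 : Real.log (Real.sqrt (Real.sqrt N)) ≤ Real.sqrt (Real.sqrt N) - 1 :=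
      Real.log_le_sub_one_of_pos hs
    have h5 : Real.log (Real.sqrt (Real.sqrt N)) = Real.log N / 4 := by
      rw [Real.log_sqrt (Real.sqrt_nonneg _), Real.log_sqrt hN0.le]
      ring
    rw [h5] at h4
    nlinarith [hs]
  have h6 : (Real.sqrt (Real.sqrt N))^2 = Real.sqrt N := Real.sq_sqrt (Real.sqrt_nonneg _)
  have m1 : Real.log N * Real.log N ≤ Real.log N * (4 * Real.sqrt (Real.sqrt N)) :=
    mul_le_mul_of_nonneg_left h3 h2
  have m2 : Real.log N * (4 * Real.sqrt (Real.sqrt N))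
      ≤ (4 * Real.sqrt (Real.sqrt N)) * (4 * Real.sqrt (Real.sqrt N)) :=
    mul_le_mul_of_nonneg_right h3 (by positivity)
  nlinarith [m1, m2, h6]

include hp hq

lemma VarY_le' (N : ℕ) (hN : 1 ≤ N) : VarY p q N ≤ 300000 * ((N:ℝ) * Real.sqrt N) := by
  have h0 := VarY_le hp hq N hN
  have h1 : (1:ℝ) ≤ (N:ℝ) := by exact_mod_cast hN
  have hs1 : (1:ℝ) ≤ Real.sqrt N := by
    have := Real.sqrt_le_sqrt h1
    rwa [Real.sqrt_one] at this
  have hL2 := sq_log_le_sqrt hN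
  have hL0 : 0 ≤ Real.log N := Real.log_nonneg h1
  have hLle : Real.log N ≤ 1 + (Real.log N)^2 := by nlinarith [sq_nonneg (Real.log N - 1)]
  have hB : 96 + 8*(32+16*Real.log N)^2 ≤ 300000 * Real.sqrt N := by
    nlinarith [hL2, hLle, hs1, hL0]
  calc VarY p q N ≤ (96 + 8*(32+16*Real.log N)^2) * N := h0
    _ ≤ (300000 * Real.sqrt N) * N := mul_le_mul_of_nonneg_right hB (by linarith)
    _ = 300000 * ((N:ℝ) * Real.sqrt N) := by ring

variable {μ : Measure K} [IsProbabilityMeasure μ] (hM : MarkovMeasure μ p q)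
include hM

lemma key (L : ℝ)
    (hfreq : ∀ δ : ℝ, 0 < δ → ∃ᶠ n in atTop,
        |(-1 / (n * Real.log 2)) * entropySum μ n - L| < δ) :
    ∃ nl : ℕ → ℕ, StrictMono nl ∧ ∀ᵐ x ∂μ,
      Tendsto (fun l : ℕ =>
          (-1 / ((nl l : ℝ) * Real.log 2)) * Real.log (μ (cylAt x (nl l))).toReal)
        atTop (𝓝 L) := by
  classical
  have hlog2 : (0:ℝ) < Real.log 2 := by
    have := Real.log_two_gt_d9; linarith
  have hsel : ∀ l m : ℕ, ∃ n : ℕ, m ≤ n ∧ (l+1)^8 ≤ n ∧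
      |(-1 / (n * Real.log 2)) * entropySum μ n - L| < 1/(l+1) := by
    intro l m
    have hδ : (0:ℝ) < 1/((l:ℝ)+1) := by positivity
    have hfr := (Filter.frequently_atTop).mp (hfreq _ hδ) (max m ((l+1)^8))
    obtain ⟨n, hn, hprop⟩ := hfr
    exact ⟨n, le_trans (le_max_left _ _) hn, le_trans (le_max_right _ _) hn, hprop⟩
  choose F hF1 hF2 hF3 using hsel
  set nl : ℕ → ℕ := fun l => Nat.rec (F 0 0) (fun l ih => F (l+1) (ih+1)) l with hnl
  have hnl0 : nl 0 = F 0 0 := rfl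
  have hnls : ∀ l, nl (l+1) = F (l+1) (nl l + 1) := fun l => rfl
  have hmono : StrictMono nl := strictMono_nat_of_lt_succ (fun l => by
    rw [hnls]
    have := hF1 (l+1) (nl l + 1)
    omega)
  have hbig : ∀ l, (l+1)^8 ≤ nl l := by
    intro l
    cases l with
    | zero => rw [hnl0]; exact hF2 0 0
    | succ m => rw [hnls]; exact hF2 (m+1) (nl m + 1)
  have hclose : ∀ l : ℕ, |(-1 / (nl l * Real.log 2)) * entropySum μ (nl l) - L|
      < 1/((l:ℝ)+1) := by
    intro l
    have key : ∀ n : ℕ, |(-1 / ((n:ℝ) * Real.log 2)) * entropySum μ n - L| < 1/((l:ℝ)+1) →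
        True := fun _ _ => trivial
    cases l with
    | zero =>
      rw [hnl0]
      have := hF3 0 0
      convert this using 2 <;> push_cast <;> ring
    | succ m =>
      rw [hnls]
      have := hF3 (m+1) (nl m + 1)
      convert this using 2 <;> push_cast <;> ring
  have hposn : ∀ l, 1 ≤ nl l := by
    intro l
    have h8 : 1 ≤ (l+1)^8 := Nat.one_le_pow _ _ (Nat.succ_pos l)
    exact le_trans h8 (hbig l)
  refine ⟨nl, hmono, ?_⟩
  set bad : ℕ → Set K := fun l =>
    {x : K | (nl l : ℝ) * Real.log 2 / ((l:ℝ)+1) ≤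
        |Yf p q (nl l) (fun i : Fin (nl l) => x i) - Ex p q (nl l) (Yf p q (nl l))|} with hbad
  have hbound : ∀ l : ℕ,
      μ (bad l) ≤ ENNReal.ofReal (300000/(Real.log 2)^2 * (1/((l:ℝ)+1)^2)) := by
    intro l
    have hN1 : 1 ≤ nl l := hposn l
    have hNr : (1:ℝ) ≤ (nl l : ℝ) := by exact_mod_cast hN1
    have ht : (0:ℝ) < (nl l : ℝ) * Real.log 2 / ((l:ℝ)+1) := by positivity
    refine le_trans (cheb hp hq hM (nl l) ht) (ENNReal.ofReal_le_ofReal ?_)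
    have hV := VarY_le' hp hq (nl l) hN1
    have hsn : ((l:ℝ)+1)^4 ≤ Real.sqrt (nl l) := by
      have h8 : (((l:ℝ)+1)^4)^2 ≤ ((nl l : ℕ) : ℝ) := by
        have hc : ((l+1)^8 : ℕ) ≤ nl l := hbig l
        have hc' := (Nat.cast_le (α := ℝ)).mpr hc
        push_cast at hc'
        nlinarith [hc']
      calc ((l:ℝ)+1)^4 = Real.sqrt ((((l:ℝ)+1)^4)^2) := (Real.sqrt_sq (by positivity)).symm
        _ ≤ Real.sqrt (nl l) := Real.sqrt_le_sqrt h8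
    have hsq : Real.sqrt (nl l) * Real.sqrt (nl l) = ((nl l : ℕ) : ℝ) :=
      Real.mul_self_sqrt (by linarith)
    rw [div_le_iff₀ (by positivity)]
    have hrhs : 300000/(Real.log 2)^2 * (1/((l:ℝ)+1)^2)
          * (((nl l : ℝ) * Real.log 2 / ((l:ℝ)+1))^2)
        = 300000 * ((nl l : ℝ))^2 / ((l:ℝ)+1)^4 := by
      field_simp
    rw [hrhs, le_div_iff₀ (by positivity)]
    have hstep : ((nl l : ℝ)) * Real.sqrt (nl l) * ((l:ℝ)+1)^4 ≤ ((nl l : ℝ))^2 := by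
      calc ((nl l : ℝ)) * Real.sqrt (nl l) * ((l:ℝ)+1)^4
          ≤ ((nl l : ℝ)) * Real.sqrt (nl l) * Real.sqrt (nl l) := by
            apply mul_le_mul_of_nonneg_left hsn (by positivity)
        _ = ((nl l : ℝ))^2 := by rw [mul_assoc, hsq]; ring
    have hV0 : 0 ≤ ((l:ℝ)+1)^4 := by positivity
    nlinarith [hV, hstep]
  have hsummable : Summable (fun l : ℕ => 300000/(Real.log 2)^2 * (1/((l:ℝ)+1)^2)) := by
    apply Summable.mul_left
    have h2 : Summable (fun n : ℕ => 1/((n:ℝ))^2) := by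
      exact_mod_cast Real.summable_one_div_nat_pow.mpr one_lt_two
    have h3 := (summable_nat_add_iff 1).mpr h2
    apply h3.congr
    intro n
    push_cast
    ring
  have htsum : ∑' l, μ (bad l) ≠ ⊤ := by
    have h1 : ∑' l, μ (bad l)
        ≤ ∑' l : ℕ, ENNReal.ofReal (300000/(Real.log 2)^2 * (1/((l:ℝ)+1)^2)) :=
      ENNReal.tsum_le_tsum hbound
    have h2 : ∑' l : ℕ, ENNReal.ofReal (300000/(Real.log 2)^2 * (1/((l:ℝ)+1)^2))
        = ENNReal.ofReal (∑' l : ℕ, 300000/(Real.log 2)^2 * (1/((l:ℝ)+1)^2)) :=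
      (ENNReal.ofReal_tsum_of_nonneg (fun l => by positivity) hsummable).symm
    rw [h2] at h1
    exact ne_top_of_le_ne_top ENNReal.ofReal_ne_top h1
  have hBC := MeasureTheory.ae_eventually_notMem htsum
  filter_upwards [hBC, ae_cyl_pos hp hq hM] with x hx1 hx2
  rw [← tendsto_sub_nhds_zero_iff]
  have htend : Tendsto (fun l : ℕ => 2/((l:ℝ)+1)) atTop (𝓝 0) := by
    have h2 := tendsto_one_div_add_atTop_nhds_zero_nat.const_mul (2:ℝ)
    rw [mul_zero] at h2
    apply h2.congr
    intro n
    ring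
  apply squeeze_zero_norm' ?_ htend
  filter_upwards [hx1] with l hl
  have hN1 : 1 ≤ nl l := hposn l
  have hNr : (1:ℝ) ≤ (nl l : ℝ) := by exact_mod_cast hN1
  have hc0 : (0:ℝ) < (nl l : ℝ) * Real.log 2 := by positivity
  have hmu : μ (cylAt x (nl l))
      = ENNReal.ofReal (rho p q (fun i : Fin (nl l) => x i)) :=
    mu_cyl hp hq hM (nl l) (fun i => x i)
  have hrpos : 0 < rho p q (fun i : Fin (nl l) => x i) := by
    have hne := hx2 (nl l)
    rw [hmu] at hne
    rcases eq_or_lt_of_le (rho_nonneg hp hq (p := p) (q := q) (fun i : Fin (nl l) => x i))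
      with h|h
    · rw [← h, ENNReal.ofReal_zero] at hne; exact absurd rfl hne
    · exact h
  have hlogμ : Real.log (μ (cylAt x (nl l))).toReal
      = - Yf p q (nl l) (fun i : Fin (nl l) => x i) := by
    rw [hmu, ENNReal.toReal_ofReal (rho_nonneg hp hq _),
      Yf_eq_neg_log hp hq (nl l) _ hrpos, neg_neg]
  have hnb : |Yf p q (nl l) (fun i : Fin (nl l) => x i) - Ex p q (nl l) (Yf p q (nl l))|
      < (nl l : ℝ) * Real.log 2 / ((l:ℝ)+1) := lt_of_not_ge (fun h => hl h)
  have haseq : (-1 / ((nl l : ℝ) * Real.log 2)) * entropySum μ (nl l)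
      = Ex p q (nl l) (Yf p q (nl l)) / ((nl l : ℝ) * Real.log 2) := by
    rw [entropySum_eq hp hq hM (nl l)]
    field_simp
  have hexpr : (-1 / ((nl l : ℝ) * Real.log 2)) * Real.log (μ (cylAt x (nl l))).toReal
      = Yf p q (nl l) (fun i : Fin (nl l) => x i) / ((nl l : ℝ) * Real.log 2) := by
    rw [hlogμ]
    field_simp
  have hdiff : |Yf p q (nl l) (fun i : Fin (nl l) => x i) / ((nl l : ℝ) * Real.log 2)
      - Ex p q (nl l) (Yf p q (nl l)) / ((nl l : ℝ) * Real.log 2)| < 1/((l:ℝ)+1) := by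
    rw [div_sub_div_same, abs_div, abs_of_pos hc0, div_lt_iff₀ hc0]
    calc |Yf p q (nl l) (fun i : Fin (nl l) => x i) - Ex p q (nl l) (Yf p q (nl l))|
        < (nl l : ℝ) * Real.log 2 / ((l:ℝ)+1) := hnb
      _ = 1/((l:ℝ)+1) * ((nl l : ℝ) * Real.log 2) := by ring
  have hclose' := hclose l
  rw [haseq] at hclose'
  rw [Real.norm_eq_abs, hexpr]
  calc |Yf p q (nl l) (fun i : Fin (nl l) => x i) / ((nl l : ℝ) * Real.log 2) - L|
      ≤ |Yf p q (nl l) (fun i : Fin (nl l) => x i) / ((nl l : ℝ) * Real.log 2)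
          - Ex p q (nl l) (Yf p q (nl l)) / ((nl l : ℝ) * Real.log 2)|
        + |Ex p q (nl l) (Yf p q (nl l)) / ((nl l : ℝ) * Real.log 2) - L| :=
        abs_sub_le _ _ _
    _ ≤ 2/((l:ℝ)+1) := by
        have h2 : 2/((l:ℝ)+1) = 1/((l:ℝ)+1) + 1/((l:ℝ)+1) := by ring
        rw [h2]
        exact add_le_add hdiff.le hclose'.le

end MAux


/-- If `μ` satisfies the non-homogeneous Markov property (M), then there are strictly
increasing sequences `(n_l)` and `(m_l)` of natural numbers such that, `μ`-almost
everywhere, `(-1/(n_l log 2)) log μ(I_{n_l}(x)) → h^*(μ)` and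
`(-1/(m_l log 2)) log μ(I_{m_l}(x)) → h_*(μ)`. -/
theorem markov_subsequences_to_entropies
    (μ : Measure K) [IsProbabilityMeasure μ] (p q : ℕ → ℝ)
    (hp : ∀ n, p n ∈ Set.Icc (0 : ℝ) 1) (hq : ∀ n, q n ∈ Set.Icc (0 : ℝ) 1)
    (hM : MarkovMeasure μ p q) :
    (∃ nl : ℕ → ℕ, StrictMono nl ∧ ∀ᵐ x ∂μ,
      Tendsto (fun l : ℕ =>
          (-1 / ((nl l : ℝ) * Real.log 2)) * Real.log (μ (cylAt x (nl l))).toReal)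
        atTop (𝓝 (hUpp μ))) ∧
    (∃ ml : ℕ → ℕ, StrictMono ml ∧ ∀ᵐ x ∂μ,
      Tendsto (fun l : ℕ =>
          (-1 / ((ml l : ℝ) * Real.log 2)) * Real.log (μ (cylAt x (ml l))).toReal)
        atTop (𝓝 (hLow μ))) := by
  have hlog2 : (0:ℝ) < Real.log 2 := by
    have := Real.log_two_gt_d9; linarith
  have hbnd : ∀ n : ℕ, 0 ≤ (-1 / ((n:ℝ) * Real.log 2)) * entropySum μ n ∧
      (-1 / ((n:ℝ) * Real.log 2)) * entropySum μ n ≤ 6 := by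
    intro n
    cases n with
    | zero => norm_num
    | succ m =>
      have hm1 : (1:ℝ) ≤ ((m+1:ℕ):ℝ) := by exact_mod_cast Nat.succ_le_succ (Nat.zero_le m)
      have hc : (0:ℝ) < ((m+1:ℕ):ℝ) * Real.log 2 := by positivity
      rw [MAux.entropySum_eq hp hq hM (m+1)]
      have hE0 := MAux.Ex_Yf_nonneg hp hq (p := p) (q := q) (m+1)
      have hE4 := MAux.Ex_Yf_le hp hq (p := p) (q := q) (m+1)
      have heq : (-1 / (((m+1:ℕ):ℝ) * Real.log 2)) * -(MAux.Ex p q (m+1) (MAux.Yf p q (m+1)))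
          = MAux.Ex p q (m+1) (MAux.Yf p q (m+1)) / (((m+1:ℕ):ℝ) * Real.log 2) := by
        field_simp
      rw [heq]
      constructor
      · positivity
      · rw [div_le_iff₀ hc]
        have := Real.log_two_gt_d9
        nlinarith [hE4, hm1]
  have hbddU : IsBoundedUnder (· ≤ ·) atTop
      (fun n : ℕ => (-1 / ((n:ℝ) * Real.log 2)) * entropySum μ n) :=
    Filter.isBoundedUnder_of ⟨6, fun n => (hbnd n).2⟩
  have hbddL : IsBoundedUnder (· ≥ ·) atTop
      (fun n : ℕ => (-1 / ((n:ℝ) * Real.log 2)) * entropySum μ n) :=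
    Filter.isBoundedUnder_of ⟨0, fun n => (hbnd n).1⟩
  constructor
  · apply MAux.key hp hq hM (hUpp μ)
    intro δ hδ
    have hlim : limsup (fun n : ℕ => (-1 / ((n:ℝ) * Real.log 2)) * entropySum μ n) atTop
        = hUpp μ := rfl
    have h1 : ∃ᶠ n : ℕ in atTop, hUpp μ - δ < (-1 / ((n:ℝ) * Real.log 2)) * entropySum μ n :=
      Filter.frequently_lt_of_lt_limsup (hbddL.isCoboundedUnder_le) (by rw [hlim]; linarith)
    have h2 : ∀ᶠ n : ℕ in atTop, (-1 / ((n:ℝ) * Real.log 2)) * entropySum μ n < hUpp μ + δ :=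
      Filter.eventually_lt_of_limsup_lt (by rw [hlim]; linarith) hbddU
    refine (h1.and_eventually h2).mono fun n ⟨hu, hv⟩ => ?_
    exact abs_sub_lt_iff.mpr ⟨by linarith, by linarith⟩
  · apply MAux.key hp hq hM (hLow μ)
    intro δ hδ
    have hlim : liminf (fun n : ℕ => (-1 / ((n:ℝ) * Real.log 2)) * entropySum μ n) atTop
        = hLow μ := rfl
    have h1 : ∃ᶠ n : ℕ in atTop, (-1 / ((n:ℝ) * Real.log 2)) * entropySum μ n < hLow μ + δ :=
      Filter.frequently_lt_of_liminf_lt (hbddU.isCoboundedUnder_ge) (by rw [hlim]; linarith)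
    have h2 : ∀ᶠ n : ℕ in atTop, hLow μ - δ < (-1 / ((n:ℝ) * Real.log 2)) * entropySum μ n :=
      Filter.eventually_lt_of_lt_liminf (by rw [hlim]; linarith) hbddL
    refine (h1.and_eventually h2).mono fun n ⟨hu, hv⟩ => ?_
    exact abs_sub_lt_iff.mpr ⟨by linarith, by linarith⟩
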